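/- Let α, β be real numbers with 0 < α < 1 and β ≥ 0, let n > 0 be real, and define n_i = α^i·n + β·(1−α^{i+1})/(1−α) for i ∈ ℕ. Let M : ℝ → ℝ be nonnegative on (0,∞) with x ↦ M(x)/x nondecreasing on (0,∞). Let s ≥ 1 and, for 1 ≤ k ≤ s, let a_k, λ_k, μ_k ≥ 0 be reals, and let b, c ≥ 0. Suppose T : ℝ → ℝ is nondecreasing and satisfies T(x) ≤ Σ_{k=1}^s a_k·M(λ_k·x + μ_k) + b·x + c + T(α·x + β) for every x ≥ 0, and let K ∈ ℕ be such that 0 < λ_k·n_i + μ_k ≤ n for all 0 ≤ i < K and 1 ≤ k ≤ s. Then T(n) ≤ T(n_K) + Σ_{k=1}^s a_k·( (λ_k/(1−α))·M(n) + (λ_k·β/(1−α) + μ_k)·K·M(n)/n ) + b·(n + β·K)/(1−α) + K·c. -/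

import Mathlib

/-- Explicit unrolled bound for the recurrence
`T(x) ≤ Σ_{k=1}^s a_k·M(λ_k·x + μ_k) + b·x + c + T(αx+β)`, with
`n_i = α^i·n + β·(1−α^{i+1})/(1−α)`:
`T(n) ≤ T(n_K) + Σ_{k=1}^s a_k·((λ_k/(1−α))·M(n) + (λ_k·β/(1−α)+μ_k)·K·M(n)/n)
       + b·(n+β·K)/(1−α) + K·c`. -/
theorem unroll_recurrence_with_M
    (α β n : ℝ) (hα0 : 0 < α) (hα1 : α < 1) (hβ : 0 ≤ β) (hn : 0 < n)
    (M : ℝ → ℝ) (hMpos : ∀ x : ℝ, 0 < x → 0 ≤ M x)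
    (hMdiv : ∀ x y : ℝ, 0 < x → x ≤ y → M x / x ≤ M y / y)
    (s : ℕ) (hs : 1 ≤ s) (a lam mu : ℕ → ℝ)
    (ha : ∀ k ∈ Finset.Icc 1 s, 0 ≤ a k)
    (hlam : ∀ k ∈ Finset.Icc 1 s, 0 ≤ lam k)
    (hmu : ∀ k ∈ Finset.Icc 1 s, 0 ≤ mu k)
    (b c : ℝ) (hb : 0 ≤ b) (hc : 0 ≤ c)
    (T : ℝ → ℝ) (hT : Monotone T)
    (hrec : ∀ x : ℝ, 0 ≤ x →
      T x ≤ (∑ k ∈ Finset.Icc 1 s, a k * M (lam k * x + mu k)) + b * x + c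
              + T (α * x + β))
    (K : ℕ)
    (hK : ∀ i < K, ∀ k ∈ Finset.Icc 1 s,
      0 < lam k * (α ^ i * n + β * (1 - α ^ (i + 1)) / (1 - α)) + mu k ∧
      lam k * (α ^ i * n + β * (1 - α ^ (i + 1)) / (1 - α)) + mu k ≤ n) :
    T n ≤ T (α ^ K * n + β * (1 - α ^ (K + 1)) / (1 - α))
        + (∑ k ∈ Finset.Icc 1 s,
            a k * (lam k / (1 - α) * M n + (lam k * β / (1 - α) + mu k) * K * (M n / n)))
        + b * (n + β * K) / (1 - α) + K * c := by
  have h1α : 0 < 1 - α := by linarith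
  set ni : ℕ → ℝ := fun i => α ^ i * n + β * (1 - α ^ (i + 1)) / (1 - α) with hni
  have hni_pos : ∀ i, 0 < ni i := by
    intro i
    have h1 : 0 < α ^ i * n := mul_pos (pow_pos hα0 i) hn
    have h2 : α ^ (i+1) ≤ 1 := pow_le_one₀ hα0.le hα1.le
    have h3 : 0 ≤ β * (1 - α ^ (i+1)) / (1 - α) :=
      div_nonneg (mul_nonneg hβ (by linarith)) h1α.le
    simp only [hni]; linarith
  have hni_succ : ∀ i, ni (i+1) = α * ni i + β := by
    intro i
    simp only [hni]
    field_simp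
    ring
  have hni_le : ∀ i, ni i ≤ α ^ i * n + β / (1 - α) := by
    intro i
    have h2 : 0 ≤ α ^ (i+1) := pow_nonneg hα0.le _
    have h4 : β * (1 - α ^ (i+1)) ≤ β := by nlinarith
    have h3 : β * (1 - α ^ (i+1)) / (1 - α) ≤ β / (1 - α) :=
      (div_le_div_iff_of_pos_right h1α).mpr h4
    simp only [hni]; linarith
  have main : ∀ N : ℕ, T n ≤ T (ni N) +
      ∑ i ∈ Finset.range N,
        ((∑ k ∈ Finset.Icc 1 s, a k * M (lam k * ni i + mu k)) + b * ni i + c) := by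
    intro N
    induction N with
    | zero =>
      simp only [Finset.range_zero, Finset.sum_empty, add_zero]
      apply hT
      have h0 : ni 0 = n + β := by
        simp only [hni, pow_zero, pow_one, one_mul]
        field_simp
        ring
      linarith [h0.ge]
    | succ N ih =>
      have step := hrec (ni N) (hni_pos N).le
      rw [← hni_succ N] at step
      rw [Finset.sum_range_succ]
      linarith
  -- geometric sum facts
  set G : ℝ := ∑ i ∈ Finset.range K, α ^ i with hG
  have hGnn : 0 ≤ G := Finset.sum_nonneg fun i _ => pow_nonneg hα0.le i
  have hGval : G = (1 - α ^ K) / (1 - α) := by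
    rw [hG, geom_sum_eq (ne_of_lt hα1) K]
    rw [div_eq_div_iff (by linarith) (by linarith)]
    ring
  have hG1 : G ≤ 1 / (1 - α) := by
    rw [hGval]
    apply (div_le_div_iff_of_pos_right h1α).mpr
    nlinarith [pow_nonneg hα0.le K]
  have hMn : 0 ≤ M n := hMpos n hn
  have hMnn : 0 ≤ M n / n := div_nonneg hMn hn.le
  -- sum of ni
  set P : ℝ := ∑ i ∈ Finset.range K, ni i with hP
  have hPle : P ≤ n * G + K * (β / (1 - α)) := by
    rw [hP]
    calc ∑ i ∈ Finset.range K, ni i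
        ≤ ∑ i ∈ Finset.range K, (α ^ i * n + β / (1 - α)) :=
          Finset.sum_le_sum fun i _ => hni_le i
      _ = n * G + K * (β / (1 - α)) := by
          rw [Finset.sum_add_distrib, Finset.sum_const, Finset.card_range, nsmul_eq_mul,
            hG, Finset.mul_sum]
          congr 1
          exact Finset.sum_congr rfl fun i _ => by ring
  -- per-k bound
  have hKb : ∀ k ∈ Finset.Icc 1 s,
      ∑ i ∈ Finset.range K, a k * M (lam k * ni i + mu k)
        ≤ a k * (lam k / (1 - α) * M n + (lam k * β / (1 - α) + mu k) * K * (M n / n)) := by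
    intro k hk
    have hak := ha k hk
    have hlk := hlam k hk
    have hmk := hmu k hk
    rw [← Finset.mul_sum]
    apply mul_le_mul_of_nonneg_left _ hak
    calc ∑ i ∈ Finset.range K, M (lam k * ni i + mu k)
        ≤ ∑ i ∈ Finset.range K, (lam k * ni i + mu k) * (M n / n) := by
          apply Finset.sum_le_sum
          intro i hi
          obtain ⟨hx, hxn⟩ := hK i (Finset.mem_range.mp hi) k hk
          have hd := hMdiv _ _ hx hxn
          calc M (lam k * ni i + mu k)
              = (M (lam k * ni i + mu k) / (lam k * ni i + mu k)) * (lam k * ni i + mu k) := by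
                exact (div_mul_cancel₀ _ hx.ne').symm
            _ ≤ (M n / n) * (lam k * ni i + mu k) := mul_le_mul_of_nonneg_right hd hx.le
            _ = (lam k * ni i + mu k) * (M n / n) := mul_comm _ _
      _ ≤ ∑ i ∈ Finset.range K, (lam k * (α ^ i * n + β / (1 - α)) + mu k) * (M n / n) := by
          apply Finset.sum_le_sum
          intro i _
          apply mul_le_mul_of_nonneg_right _ hMnn
          nlinarith [hni_le i]
      _ = (lam k * n * (M n / n)) * G
            + (K : ℝ) * ((lam k * β / (1 - α) + mu k) * (M n / n)) := by
          rw [hG, Finset.mul_sum,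
            show ((K:ℝ) * ((lam k * β / (1 - α) + mu k) * (M n / n))
              = ∑ _i ∈ Finset.range K, ((lam k * β / (1 - α) + mu k) * (M n / n))) from by
                rw [Finset.sum_const, Finset.card_range, nsmul_eq_mul],
            ← Finset.sum_add_distrib]
          exact Finset.sum_congr rfl fun i _ => by ring
      _ ≤ lam k / (1 - α) * M n + (lam k * β / (1 - α) + mu k) * K * (M n / n) := by
          have h1 : lam k * n * (M n / n) * G ≤ lam k * n * (M n / n) * (1 / (1 - α)) :=
            mul_le_mul_of_nonneg_left hG1 (by positivity)
          have h2 : lam k * n * (M n / n) * (1 / (1 - α)) = lam k / (1 - α) * M n := by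
            field_simp
          nlinarith
  -- assemble
  have hsum : ∑ i ∈ Finset.range K,
      ((∑ k ∈ Finset.Icc 1 s, a k * M (lam k * ni i + mu k)) + b * ni i + c)
      = (∑ k ∈ Finset.Icc 1 s, ∑ i ∈ Finset.range K, a k * M (lam k * ni i + mu k))
        + b * P + K * c := by
    rw [Finset.sum_add_distrib, Finset.sum_add_distrib, Finset.sum_comm,
      ← Finset.mul_sum, Finset.sum_const, Finset.card_range, nsmul_eq_mul, hP]
  have hMsum : (∑ k ∈ Finset.Icc 1 s, ∑ i ∈ Finset.range K, a k * M (lam k * ni i + mu k))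
      ≤ ∑ k ∈ Finset.Icc 1 s,
          a k * (lam k / (1 - α) * M n + (lam k * β / (1 - α) + mu k) * K * (M n / n)) :=
    Finset.sum_le_sum hKb
  have hbsum : b * P ≤ b * (n + β * K) / (1 - α) := by
    have h1 : b * P ≤ b * (n * G + K * (β / (1 - α))) := mul_le_mul_of_nonneg_left hPle hb
    have h2 : n * G ≤ n * (1 / (1 - α)) := mul_le_mul_of_nonneg_left hG1 hn.le
    have h3 : b * (n * (1 / (1 - α)) + K * (β / (1 - α))) = b * (n + β * K) / (1 - α) := by
      rw [eq_div_iff (ne_of_gt h1α)]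
      field_simp
      try ring
      try exact Or.inl trivial
    nlinarith
  have := main K
  rw [hsum] at this
  have hTK : T (ni K) = T (α ^ K * n + β * (1 - α ^ (K + 1)) / (1 - α)) := rfl
  linarith
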